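/- Let λ₁ ∈ ℂ with Im(λ₁) ≠ 0 and λ₁² ≠ −1, let n be a positive integer, r ∈ {1,−1}, and let s₁, s₂, χ, τ ∈ ℝ. Suppose A, B, C, D ∈ ℂ satisfy the four relations: (i) A − B + (r/(2n))C − (r/(2n))D = 0; (ii) iλ₁A − iλ₁*B − (r/(2n))C − (r/(2n))D − 4τ = 0; (iii) iλ₁²A − i(λ₁*)²B − (ir/(2n))C + (ir/(2n))D − 2χ − 2τs₁ = 0; (iv) iλ₁³A − i(λ₁*)³B + (r/(2n))C + (r/(2n))D + (1/2)(4s₂ − 3s₁²)τ − s₁χ = 0. Then C = −nr·[(8|λ₁|² − 8Re(λ₁)s₁ + 3s₁² − 4s₂ − 16Re(λ₁)i + 4is₁)τ + (2s₁ − 8Re(λ₁) + 4i)χ] / (2(i−λ₁)(i−λ₁*)), and A = [(4s₂ − 3s₁² + 4s₁λ₁* − 8)τ + (4λ₁* − 2s₁)χ] / (4(1+λ₁²)Im(λ₁)). -/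

import Mathlib

noncomputable section

open Complex

/-- From the four normalization relations of the g₂-function one obtains the
explicit formulas for C = 1/R₂(i) and A = 1/R₂(λ₁). -/
theorem g2_normalization_formulas (lam1 : ℂ) (him : lam1.im ≠ 0)
    (hsq : lam1 ^ 2 ≠ -1)
    (n : ℕ) (hn : 0 < n) (r : ℝ) (hr : r = 1 ∨ r = -1)
    (s₁ s₂ χ τ : ℝ) (A B C D : ℂ)
    (h1 : A - B + ((r : ℂ) / (2 * (n : ℂ))) * C - ((r : ℂ) / (2 * (n : ℂ))) * D = 0)
    (h2 : Complex.I * lam1 * A - Complex.I * (starRingEnd ℂ lam1) * B -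
        ((r : ℂ) / (2 * (n : ℂ))) * C - ((r : ℂ) / (2 * (n : ℂ))) * D - 4 * (τ : ℂ) = 0)
    (h3 : Complex.I * lam1 ^ 2 * A - Complex.I * (starRingEnd ℂ lam1) ^ 2 * B -
        (Complex.I * (r : ℂ) / (2 * (n : ℂ))) * C +
        (Complex.I * (r : ℂ) / (2 * (n : ℂ))) * D - 2 * (χ : ℂ) - 2 * (τ : ℂ) * (s₁ : ℂ) = 0)
    (h4 : Complex.I * lam1 ^ 3 * A - Complex.I * (starRingEnd ℂ lam1) ^ 3 * B +
        ((r : ℂ) / (2 * (n : ℂ))) * C + ((r : ℂ) / (2 * (n : ℂ))) * D +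
        (1 / 2 : ℂ) * (4 * (s₂ : ℂ) - 3 * (s₁ : ℂ) ^ 2) * (τ : ℂ) -
        (s₁ : ℂ) * (χ : ℂ) = 0) :
    C = -((n : ℂ) * (r : ℂ)) *
        ((8 * ((‖lam1‖ : ℝ) : ℂ) ^ 2 - 8 * (lam1.re : ℂ) * (s₁ : ℂ) +
              3 * (s₁ : ℂ) ^ 2 - 4 * (s₂ : ℂ) - 16 * (lam1.re : ℂ) * Complex.I +
              4 * Complex.I * (s₁ : ℂ)) * (τ : ℂ) +
          (2 * (s₁ : ℂ) - 8 * (lam1.re : ℂ) + 4 * Complex.I) * (χ : ℂ)) /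
        (2 * (Complex.I - lam1) * (Complex.I - starRingEnd ℂ lam1)) ∧
    A = ((4 * (s₂ : ℂ) - 3 * (s₁ : ℂ) ^ 2 + 4 * (s₁ : ℂ) * (starRingEnd ℂ lam1) - 8) *
            (τ : ℂ) +
          (4 * (starRingEnd ℂ lam1) - 2 * (s₁ : ℂ)) * (χ : ℂ)) /
        (4 * (1 + lam1 ^ 2) * (lam1.im : ℂ)) := by
  set m : ℂ := starRingEnd ℂ lam1 with hm
  have hIsq : Complex.I ^ 2 = (-1 : ℂ) := Complex.I_sq
  -- nonvanishing facts
  have hn0 : (n : ℂ) ≠ 0 := Nat.cast_ne_zero.mpr hn.ne'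
  have h2n0 : (2 : ℂ) * (n : ℂ) ≠ 0 := mul_ne_zero two_ne_zero hn0
  have hr0 : (r : ℂ) ≠ 0 := by rcases hr with h | h <;> simp [h]
  have hr2 : (r : ℂ) * (r : ℂ) = 1 := by
    rcases hr with h | h <;> norm_num [h]
  have hlm : lam1 - m ≠ 0 := by
    intro h
    apply him
    have hc : lam1 = starRingEnd ℂ lam1 := by rw [hm] at h; exact sub_eq_zero.mp h
    exact Complex.conj_eq_iff_im.mp hc.symm
  have hlsq : 1 + lam1 ^ 2 ≠ 0 := fun h => hsq (by linear_combination h)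
  have hmsq : 1 + m ^ 2 ≠ 0 := by
    rw [hm]
    intro h
    apply hlsq
    have h2 := congrArg (starRingEnd ℂ) h
    simpa using h2
  have hil : Complex.I - lam1 ≠ 0 := by
    intro h
    apply hlsq
    have hl' : lam1 = Complex.I := (sub_eq_zero.mp h).symm
    rw [hl', hIsq]; ring
  have hplm : Complex.I + lam1 ≠ 0 := by
    intro h
    apply hlsq
    have hl' : lam1 = -Complex.I := by linear_combination h
    rw [hl']; ring_nf; rw [hIsq]; ring
  have hie : Complex.I - m ≠ 0 := by
    intro h
    apply hmsq
    have hm' : m = Complex.I := (sub_eq_zero.mp h).symm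
    rw [hm', hIsq]; ring
  have hpm : Complex.I + m ≠ 0 := by
    intro h
    apply hmsq
    have hm' : m = -Complex.I := by linear_combination h
    rw [hm']; ring_nf; rw [hIsq]; ring
  have him0 : (lam1.im : ℂ) ≠ 0 := by exact_mod_cast him
  -- relations between re, im, abs and lam1, m
  have hre : (lam1.re : ℂ) = (lam1 + m) / 2 := by
    rw [hm]
    have h := Complex.add_conj lam1
    push_cast at h
    field_simp
    linear_combination -h
  have hsub : 2 * Complex.I * (lam1.im : ℂ) = lam1 - m := by
    rw [hm]
    have h := Complex.sub_conj lam1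
    push_cast at h
    linear_combination -h
  have habs : ((‖lam1‖ : ℝ) : ℂ) ^ 2 = lam1 * m := by
    rw [hm, ← Complex.ofReal_pow, Complex.sq_norm, Complex.mul_conj]
  -- denominator-cleared versions of the hypotheses
  have hk : (r : ℂ) / (2 * (n : ℂ)) * (2 * (n : ℂ)) = (r : ℂ) :=
    div_mul_cancel₀ _ h2n0
  have h1' : 2 * (n : ℂ) * A - 2 * (n : ℂ) * B + (r : ℂ) * C - (r : ℂ) * D = 0 := by
    linear_combination (2 * (n : ℂ)) * h1 + (D - C) * hk
  have h2' : 2 * (n : ℂ) * Complex.I * lam1 * A - 2 * (n : ℂ) * Complex.I * m * B -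
      (r : ℂ) * C - (r : ℂ) * D - 8 * (n : ℂ) * (τ : ℂ) = 0 := by
    linear_combination (2 * (n : ℂ)) * h2 + (D + C) * hk
  have h3' : 2 * (n : ℂ) * Complex.I * lam1 ^ 2 * A - 2 * (n : ℂ) * Complex.I * m ^ 2 * B -
      Complex.I * (r : ℂ) * C + Complex.I * (r : ℂ) * D - 4 * (n : ℂ) * (χ : ℂ) -
      4 * (n : ℂ) * (s₁ : ℂ) * (τ : ℂ) = 0 := by
    linear_combination (2 * (n : ℂ)) * h3 + (Complex.I * C - Complex.I * D) * hk
  have h4' : 2 * (n : ℂ) * Complex.I * lam1 ^ 3 * A - 2 * (n : ℂ) * Complex.I * m ^ 3 * B +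
      (r : ℂ) * C + (r : ℂ) * D + (n : ℂ) * (4 * (s₂ : ℂ) - 3 * (s₁ : ℂ) ^ 2) * (τ : ℂ) -
      2 * (n : ℂ) * (s₁ : ℂ) * (χ : ℂ) = 0 := by
    linear_combination (2 * (n : ℂ)) * h4 + (-D - C) * hk
  constructor
  · -- the formula for C
    rw [hre, habs, eq_div_iff (mul_ne_zero (mul_ne_zero two_ne_zero hil) hie)]
    apply mul_left_cancel₀
      (mul_ne_zero (mul_ne_zero (mul_ne_zero hr0 hlm) hplm) hpm :
        (r : ℂ) * (lam1 - m) * (Complex.I + lam1) * (Complex.I + m) ≠ 0)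
    linear_combination
      ((-1)*lam1*m^2*Complex.I^2 + 1*lam1*m^3*Complex.I^3 + 1*lam1^2*m*Complex.I^2 + 1*lam1^2*m^3*Complex.I^2 + (-1)*lam1^3*m*Complex.I^3 + (-1)*lam1^3*m^2*Complex.I^2) * h1' +
      (1*m^2*Complex.I + (-1)*m^3*Complex.I^2 + (-1)*lam1^2*Complex.I + (-1)*lam1^2*m^3*Complex.I^2 + 1*lam1^3*Complex.I^2 + 1*lam1^3*m^2*Complex.I^2) * h2' +
      ((-1)*m*Complex.I + (-1)*m^3*Complex.I + 1*lam1*Complex.I + 1*lam1*m^3*Complex.I^2 + 1*lam1^3*Complex.I + (-1)*lam1^3*m*Complex.I^2) * h3' +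
      (1*m*Complex.I^2 + 1*m^2*Complex.I + (-1)*lam1*Complex.I^2 + (-1)*lam1*m^2*Complex.I^2 + (-1)*lam1^2*Complex.I + 1*lam1^2*m*Complex.I^2) * h4' +
      ((-2)*m*Complex.I^2*(n:ℂ)*(χ:ℂ)*(s₁:ℂ) + 4*m*Complex.I^2*(n:ℂ)*(τ:ℂ)*(s₂:ℂ) + (-3)*m*Complex.I^2*(n:ℂ)*(τ:ℂ)*(s₁:ℂ)^2 + (-4)*m*Complex.I^3*(n:ℂ)*(χ:ℂ) + (-4)*m*Complex.I^3*(n:ℂ)*(τ:ℂ)*(s₁:ℂ) + (-2)*m^2*Complex.I*(n:ℂ)*(χ:ℂ)*(s₁:ℂ) + 4*m^2*Complex.I*(n:ℂ)*(τ:ℂ)*(s₂:ℂ) + (-3)*m^2*Complex.I*(n:ℂ)*(τ:ℂ)*(s₁:ℂ)^2 + 8*m^2*Complex.I^3*(n:ℂ)*(τ:ℂ) + 4*m^3*Complex.I*(n:ℂ)*(χ:ℂ) + 4*m^3*Complex.I*(n:ℂ)*(τ:ℂ)*(s₁:ℂ) + 8*m^3*Complex.I^2*(n:ℂ)*(τ:ℂ)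 + 2*lam1*Complex.I^2*(n:ℂ)*(χ:ℂ)*(s₁:ℂ) + (-4)*lam1*Complex.I^2*(n:ℂ)*(τ:ℂ)*(s₂:ℂ) + 3*lam1*Complex.I^2*(n:ℂ)*(τ:ℂ)*(s₁:ℂ)^2 + 4*lam1*Complex.I^3*(n:ℂ)*(χ:ℂ) + 4*lam1*Complex.I^3*(n:ℂ)*(τ:ℂ)*(s₁:ℂ) + (-2)*lam1*m^2*(n:ℂ)*(χ:ℂ)*(s₁:ℂ) + 4*lam1*m^2*(n:ℂ)*(τ:ℂ)*(s₂:ℂ) + (-3)*lam1*m^2*(n:ℂ)*(τ:ℂ)*(s₁:ℂ)^2 + 4*lam1*m^3*(n:ℂ)*(χ:ℂ) + 4*lam1*m^3*(n:ℂ)*(τ:ℂ)*(s₁:ℂ) + 2*lam1^2*Complex.I*(n:ℂ)*(χ:ℂ)*(s₁:ℂ) + (-4)*lam1^2*Complex.I*(n:ℂ)*(τ:ℂ)*(s₂:ℂ) + 3*lam1^2*Complex.I*(n:ℂ)*(τ:ℂ)*(s₁:ℂ)^2 + (-8)*lam1^2*Complex.I^3*(n:ℂ)*(τ:ℂ) +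 2*lam1^2*m*(n:ℂ)*(χ:ℂ)*(s₁:ℂ) + (-4)*lam1^2*m*(n:ℂ)*(τ:ℂ)*(s₂:ℂ) + 3*lam1^2*m*(n:ℂ)*(τ:ℂ)*(s₁:ℂ)^2 + (-8)*lam1^2*m^3*(n:ℂ)*(τ:ℂ) + (-4)*lam1^3*Complex.I*(n:ℂ)*(χ:ℂ) + (-4)*lam1^3*Complex.I*(n:ℂ)*(τ:ℂ)*(s₁:ℂ) + (-8)*lam1^3*Complex.I^2*(n:ℂ)*(τ:ℂ) + (-4)*lam1^3*m*(n:ℂ)*(χ:ℂ) + (-4)*lam1^3*m*(n:ℂ)*(τ:ℂ)*(s₁:ℂ) + 8*lam1^3*m^2*(n:ℂ)*(τ:ℂ)) * hr2 +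
      ((-4)*m*Complex.I*(n:ℂ)*(χ:ℂ) + (-4)*m*Complex.I*(n:ℂ)*(τ:ℂ)*(s₁:ℂ) + (-2)*m*Complex.I^2*(r:ℂ)*C + 8*m^2*Complex.I*(n:ℂ)*(τ:ℂ) + 4*lam1*Complex.I*(n:ℂ)*(χ:ℂ) + 4*lam1*Complex.I*(n:ℂ)*(τ:ℂ)*(s₁:ℂ) + 2*lam1*Complex.I^2*(r:ℂ)*C + (-2)*lam1*m^2*(n:ℂ)*(χ:ℂ)*(s₁:ℂ) + 4*lam1*m^2*(n:ℂ)*(τ:ℂ)*(s₂:ℂ) + (-3)*lam1*m^2*(n:ℂ)*(τ:ℂ)*(s₁:ℂ)^2 + 4*lam1*m^3*(n:ℂ)*(χ:ℂ) + 4*lam1*m^3*(n:ℂ)*(τ:ℂ)*(s₁:ℂ) + (-8)*lam1^2*Complex.I*(n:ℂ)*(τ:ℂ) + 2*lam1^2*m*(n:ℂ)*(χ:ℂ)*(s₁:ℂ) + (-4)*lam1^2*m*(n:ℂ)*(τ:ℂ)*(s₂:ℂ) + 3*lam1^2*m*(n:ℂ)*(τ:ℂ)*(s₁:ℂ)^2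 + (-8)*lam1^2*m^3*(n:ℂ)*(τ:ℂ) + (-2)*lam1^2*m^3*(r:ℂ)*C + (-4)*lam1^3*m*(n:ℂ)*(χ:ℂ) + (-4)*lam1^3*m*(n:ℂ)*(τ:ℂ)*(s₁:ℂ) + 8*lam1^3*m^2*(n:ℂ)*(τ:ℂ) + 2*lam1^3*m^2*(r:ℂ)*C) * hIsq
  · -- the formula for A
    rw [eq_div_iff (mul_ne_zero (mul_ne_zero (by norm_num) hlsq) him0)]
    apply mul_left_cancel₀
      (mul_ne_zero (mul_ne_zero (mul_ne_zero two_ne_zero Complex.I_ne_zero) hn0) hmsq :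
        2 * Complex.I * (n : ℂ) * (1 + m ^ 2) ≠ 0)
    linear_combination
      (2*m*Complex.I^2 + 2*m^3*Complex.I^2) * h1' +
      ((-2)*Complex.I + (-2)*m^2*Complex.I) * h2' +
      (2*m*Complex.I + 2*m^3*Complex.I) * h3' +
      ((-2)*Complex.I + (-2)*m^2*Complex.I) * h4' +
      ((-4)*m*(n:ℂ)*A + (-4)*m^3*(n:ℂ)*A + 4*lam1*(n:ℂ)*A + 4*lam1*m^2*(n:ℂ)*A + (-4)*lam1^2*m*(n:ℂ)*A + (-4)*lam1^2*m^3*(n:ℂ)*A + 4*lam1^3*(n:ℂ)*A + 4*lam1^3*m^2*(n:ℂ)*A) * hIsq +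
      (4*(n:ℂ)*A + 4*m^2*(n:ℂ)*A + 4*lam1^2*(n:ℂ)*A + 4*lam1^2*m^2*(n:ℂ)*A) * hsub
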